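/- State refinement preserves paths: let (A, stepA) be a transition system, s ∈ A a state refined into a nonempty set of new states N with map back : N → {s}, and suppose every edge (x, s) in stepA is replaced by edges (x, n) for all n ∈ N, and every edge (s, y) by edges (n, y) for all n ∈ N. Then for any path a →* b in the original system with a ≠ s and b ≠ s, there is a corresponding path a →* b in the refined system. -/

import Mathlib

def refinedStep {A : Type*} (stepA : A → A → Prop) (s : A) (N : Type*) :
    ({x : A // x ≠ s} ⊕ N) → ({x : A // x ≠ s} ⊕ N) → Prop
  | .inl x, .inl y => stepA x.val y.val
  | .inl x, .inr _ => stepA x.val s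
  | .inr _, .inl y => stepA s y.val
  | .inr _, .inr _ => stepA s s

open Classical in
noncomputable def liftState {A : Type*} (s : A) (N : Type*) [Nonempty N] (x : A) :
    ({x : A // x ≠ s} ⊕ N) :=
  if h : x = s then Sum.inr (Classical.arbitrary N) else Sum.inl ⟨x, h⟩

theorem state_refinement_preserves_paths {A : Type*} (stepA : A → A → Prop) (s : A)
    (N : Type*) [Nonempty N] (a b : A) (ha : a ≠ s) (hb : b ≠ s)
    (hpath : Relation.ReflTransGen stepA a b) :
    Relation.ReflTransGen (refinedStep stepA s N)
      (Sum.inl ⟨a, ha⟩) (Sum.inl ⟨b, hb⟩) := by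
  have key : ∀ x y, stepA x y →
      refinedStep stepA s N (liftState s N x) (liftState s N y) := by
    intro x y hxy
    unfold liftState
    split <;> split <;> simp_all [refinedStep]
  have := Relation.ReflTransGen.lift (liftState s N) key a b hpath
  simpa [Function.onFun, liftState, ha, hb] using this
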